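/- Let l be a positive integer, k an integer with 1 ≤ k ≤ l/2 - 1, and let g(x) = |sin(lπx)/(l sin πx)|. Then for every x ∈ (k/l, (k+1)/l), the derivative of sin(lπx)/(l sin πx) satisfies |d/dx [sin(lπx)/(l sin πx)]| ≤ (π/sin(πx))·(πx/sin(kπ/l)) ≤ lπ²/(4k). -/

import Mathlib

open Real

private lemma numer_bound (L θ α β σ s c sφ cφ : ℝ) (hL : 0 < L)
    (hσ0 : 0 < σ) (hσα : σ ≤ α) (hσs : σ ≤ s) (hs0 : 0 < s)
    (hc0 : 0 ≤ c) (hc1 : c ≤ 1) (hαθ : α ≤ θ) (hθβ : θ ≤ β)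
    (hcφ1 : cφ ≤ 1) (hcφ1' : -1 ≤ cφ) (hsφ0 : 0 ≤ sφ)
    (hsφa : sφ ≤ L * (θ - α)) (hsφb : sφ ≤ L * (β - θ))
    (hmid : cφ < 0 → α + β ≤ 2 * θ) :
    |cφ * s - sφ * c / L| ≤ θ * s / σ := by
  have hθσ : σ ≤ θ := le_trans hσα hαθ
  have hsφc : sφ * c ≤ sφ := by nlinarith
  rw [abs_le]
  constructor
  · rw [neg_le, neg_sub]
    rcases lt_or_ge cφ 0 with h | h
    · have hm := hmid h
      have ha : sφ * c / L ≤ β - θ := by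
        rw [div_le_iff₀ hL]; nlinarith
      have hb : (β - θ) + s ≤ θ * s / σ := by
        rw [le_div_iff₀ hσ0]
        nlinarith [mul_nonneg (sub_nonneg.2 hσs) (sub_nonneg.2 hθσ)]
      nlinarith [mul_le_mul_of_nonneg_right hcφ1' hs0.le]
    · have ha : sφ * c / L ≤ θ - α := by
        rw [div_le_iff₀ hL]; nlinarith
      have hb : θ - α ≤ θ * s / σ := by
        rw [le_div_iff₀ hσ0]; nlinarith
      nlinarith [mul_nonneg h hs0.le]
  · have h0 : 0 ≤ sφ * c / L := by positivity
    have ha : cφ * s - sφ * c / L ≤ s := by nlinarith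
    have hb : s ≤ θ * s / σ := by
      rw [le_div_iff₀ hσ0]; nlinarith
    linarith

set_option maxHeartbeats 1000000 in
theorem stmt10 (l : ℕ) (hl : 0 < l) (k : ℕ) (hk1 : 1 ≤ k) (hk2 : (k : ℝ) ≤ (l : ℝ) / 2 - 1)
    (x : ℝ) (hx : x ∈ Set.Ioo ((k : ℝ) / (l : ℝ)) (((k : ℝ) + 1) / (l : ℝ))) :
    |deriv (fun t : ℝ => Real.sin ((l : ℝ) * π * t) / ((l : ℝ) * Real.sin (π * t))) x| ≤
        (π / Real.sin (π * x)) * (π * x / Real.sin ((k : ℝ) * π / (l : ℝ))) ∧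
      (π / Real.sin (π * x)) * (π * x / Real.sin ((k : ℝ) * π / (l : ℝ))) ≤
        (l : ℝ) * π ^ 2 / (4 * (k : ℝ)) := by
  have hπ := Real.pi_pos
  have hl' : (0:ℝ) < l := by exact_mod_cast hl
  have hk' : (1:ℝ) ≤ k := by exact_mod_cast hk1
  obtain ⟨hxl, hxr⟩ := hx
  have hx0 : 0 < x := lt_of_le_of_lt (by positivity) hxl
  have hxl' : (k:ℝ) < l * x := by rw [div_lt_iff₀ hl'] at hxl; nlinarith
  have hxr' : (l:ℝ) * x < (k:ℝ) + 1 := by rw [lt_div_iff₀ hl'] at hxr; nlinarith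
  clear hxl hxr
  set θ := π * x with hθdef
  set α := (k:ℝ) * π / (l:ℝ) with hαdef
  set β := ((k:ℝ) + 1) * π / (l:ℝ) with hβdef
  have hαθ : α < θ := by
    rw [hαdef, hθdef, div_lt_iff₀ hl']; nlinarith
  have hθβ : θ < β := by
    rw [hβdef, hθdef, lt_div_iff₀ hl']; nlinarith
  have hβhalf : β ≤ π / 2 := by
    rw [hβdef, div_le_div_iff₀ hl' two_pos]; nlinarith
  have hα0 : 0 < α := by positivity
  have hθ0 : 0 < θ := by positivity
  have hθhalf : θ ≤ π / 2 := le_of_lt (lt_of_lt_of_le hθβ hβhalf)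
  set s := Real.sin θ with hsdef
  set σ := Real.sin α with hσdef
  set c := Real.cos θ with hcdef
  have hσ0 : 0 < σ := Real.sin_pos_of_pos_of_lt_pi hα0 (by linarith)
  have hs0 : 0 < s := Real.sin_pos_of_pos_of_lt_pi hθ0 (by linarith)
  have hσs : σ ≤ s := by
    apply Real.strictMonoOn_sin.monotoneOn ⟨by linarith, by linarith⟩
      ⟨by linarith, hθhalf⟩ hαθ.le
  have hσα : σ ≤ α := (Real.sin_lt hα0).le
  have hc0 : 0 ≤ c := Real.cos_nonneg_of_mem_Icc ⟨by linarith, hθhalf⟩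
  have hc1 : c ≤ 1 := Real.cos_le_one θ
  -- Jordan inequalities
  have hs2x : 2 * x ≤ s := by
    have h := Real.mul_le_sin (le_of_lt hθ0) hθhalf
    rw [hsdef, hθdef]
    calc 2 * x = 2 / π * (π * x) := by field_simp
    _ ≤ _ := by rw [hθdef] at h; exact h
  have hσ2k : 2 * (k:ℝ) / (l:ℝ) ≤ σ := by
    have h := Real.mul_le_sin (le_of_lt hα0) (by linarith : α ≤ π / 2)
    rw [hσdef, hαdef]
    calc 2 * (k:ℝ) / (l:ℝ) = 2 / π * ((k:ℝ) * π / (l:ℝ)) := by field_simp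
    _ ≤ _ := by rw [hαdef] at h; exact h
  -- derivative computation
  have hden : (l:ℝ) * Real.sin (π * x) ≠ 0 := by
    have hh : Real.sin (π * x) = s := rfl
    rw [hh]; positivity
  have h1 : HasDerivAt (fun t : ℝ => Real.sin ((l:ℝ) * π * t))
      (Real.cos ((l:ℝ) * π * x) * ((l:ℝ) * π)) x := by
    have h := ((hasDerivAt_id x).const_mul ((l:ℝ) * π)).sin
    simpa using h
  have h2 : HasDerivAt (fun t : ℝ => (l:ℝ) * Real.sin (π * t))
      ((l:ℝ) * (Real.cos (π * x) * π)) x := by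
    have h := (((hasDerivAt_id x).const_mul π).sin).const_mul (l:ℝ)
    simpa using h
  have hd := h1.div h2 hden
  -- abbreviations for the oscillating terms
  set K := Real.cos ((l:ℝ) * π * x) with hKdef
  set S := Real.sin ((l:ℝ) * π * x) with hSdef
  set φ : ℝ := (l:ℝ) * π * x - (k:ℝ) * π with hφdef
  have hφθ : (l:ℝ) * π * x = (k:ℝ) * π + φ := by ring
  have hφ0 : 0 < φ := by rw [hφdef]; nlinarith
  have hφπ : φ < π := by rw [hφdef]; nlinarith
  have hφl : φ = (l:ℝ) * (θ - α) := by
    rw [hφdef, hθdef, hαdef]; field_simp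
  have hπφl : π - φ = (l:ℝ) * (β - θ) := by
    rw [hφdef, hθdef, hβdef]; field_simp; ring
  have hz : Real.sin ((k:ℝ) * π) = 0 := by
    rw [Real.sin_eq_zero_iff]
    exact ⟨k, by push_cast; ring⟩
  set e : ℝ := Real.cos ((k:ℝ) * π) with hedef
  have he2 : e ^ 2 = 1 := by
    have h := Real.sin_sq_add_cos_sq ((k:ℝ) * π)
    rw [hz] at h; rw [hedef]; nlinarith
  have hKe : K = e * Real.cos φ := by
    rw [hKdef, hφθ, Real.cos_add, hedef, hz]; ring
  have hSe : S = e * Real.sin φ := by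
    rw [hSdef, hφθ, Real.sin_add, hedef, hz]; ring
  have hsinφ0 : 0 < Real.sin φ := Real.sin_pos_of_pos_of_lt_pi hφ0 hφπ
  have hsinφa : Real.sin φ ≤ (l:ℝ) * (θ - α) := by
    rw [← hφl]; exact (Real.sin_lt hφ0).le
  have hsinφb : Real.sin φ ≤ (l:ℝ) * (β - θ) := by
    rw [← hπφl]
    have h := Real.sin_pi_sub φ
    have h2 := (Real.sin_lt (by linarith : 0 < π - φ)).le
    rw [h] at h2; exact h2
  have hmid : Real.cos φ < 0 → α + β ≤ 2 * θ := by
    intro h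
    have hφ2 : π / 2 < φ := by
      by_contra hcon; push_neg at hcon
      exact absurd (Real.cos_nonneg_of_mem_Icc ⟨by linarith, hcon⟩) (not_le.mpr h)
    have key : (l:ℝ) * (2 * θ - α - β) = 2 * φ - π := by linarith [hφl, hπφl]
    by_contra hcon; push_neg at hcon
    have : (l:ℝ) * (2 * θ - α - β) < 0 :=
      mul_neg_of_pos_of_neg hl' (by linarith)
    linarith
  -- main numerator bound
  have hkey : |K * s - S * c / (l:ℝ)| ≤ θ * s / σ := by
    rw [hKe, hSe]
    have heq : e * Real.cos φ * s - e * Real.sin φ * c / (l:ℝ)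
        = e * (Real.cos φ * s - Real.sin φ * c / (l:ℝ)) := by ring
    rw [heq, abs_mul]
    have he1 : |e| = 1 := by
      rw [← Real.sqrt_one, ← he2, Real.sqrt_sq_eq_abs]
    rw [he1, one_mul]
    exact numer_bound (l:ℝ) θ α β σ s c (Real.sin φ) (Real.cos φ) hl'
      hσ0 hσα hσs hs0 hc0 hc1 hαθ.le hθβ.le (Real.cos_le_one φ)
      (Real.neg_one_le_cos φ) hsinφ0.le hsinφa hsinφb hmid
  constructor
  · -- first inequality
    rw [show deriv (fun t : ℝ => Real.sin ((l : ℝ) * π * t) / ((l : ℝ) * Real.sin (π * t))) x = _ from hd.deriv]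
    have hsx : Real.sin (π * x) = s := rfl
    have hcx : Real.cos (π * x) = c := rfl
    rw [hsx, hcx]
    have hrw : (K * ((l:ℝ) * π) * ((l:ℝ) * s) - S * ((l:ℝ) * (c * π))) / ((l:ℝ) * s) ^ 2
        = π * (K * s - S * c / (l:ℝ)) / s ^ 2 := by
      field_simp
    rw [hrw, abs_div, abs_of_pos (by positivity : (0:ℝ) < s ^ 2), abs_mul,
      abs_of_pos hπ]
    have hrhs : (π / s) * (θ / σ) = π * (θ * s / σ) / s ^ 2 := by
      field_simp
    rw [hrhs]
    gcongr
  · -- second inequality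
    have he1 : (π / s) * (θ / σ) = π ^ 2 * x / (s * σ) := by
      rw [hθdef]; field_simp
    rw [he1, div_le_div_iff₀ (by positivity) (by positivity : (0:ℝ) < 4 * (k:ℝ))]
    have h1 : 2 * (k:ℝ) ≤ (l:ℝ) * σ := by
      rw [div_le_iff₀ hl'] at hσ2k; linarith
    have hA : 4 * (k:ℝ) * x ≤ (l:ℝ) * (s * σ) := by
      calc 4 * (k:ℝ) * x = (2 * (k:ℝ)) * (2 * x) := by ring
      _ ≤ ((l:ℝ) * σ) * s := mul_le_mul h1 hs2x (by positivity) (by positivity)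
      _ = (l:ℝ) * (s * σ) := by ring
    calc π ^ 2 * x * (4 * (k:ℝ)) = π ^ 2 * (4 * (k:ℝ) * x) := by ring
    _ ≤ π ^ 2 * ((l:ℝ) * (s * σ)) := mul_le_mul_of_nonneg_left hA (sq_nonneg π)
    _ = (l:ℝ) * π ^ 2 * (s * σ) := by ring
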